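/- arXiv:1602.04443 — 2 statements merged into one kernel-verified Lean document; each statement's English description precedes it below -/
import Mathlib

section
/- Fix t̃ > −1/2 and set p = (1+t̃)/(1+2t̃). Then for any (A, C) with C > 0 on the circle passing through (1/2, 0) and (p, 0) centered on the A-axis (i.e. with center ((1/2+p)/2, 0) and radius |p − 1/2|/2), one has ((2A−1)(1−A) − 2C²)/((2A−1)² + 4C²) = t̃. -/
/-- Any point `(A,C)` with `C > 0` on the circle through `(1/2,0)` and `(p,0)`
centered on the `A`-axis, where `p = (1+t̃)/(1+2t̃)`, has unreduced twist `t̃`. -/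
theorem stmt6 (t : ℝ) (ht : -1/2 < t) (A C : ℝ) (hC : 0 < C)
    (hcirc : (A - (1/2 + (1+t)/(1+2*t))/2)^2 + C^2
      = (((1+t)/(1+2*t) - 1/2)/2)^2) :
    ((2*A - 1)*(1 - A) - 2*C^2) / ((2*A - 1)^2 + 4*C^2) = t := by
  have h0 : (0:ℝ) < 1 + 2*t := by linarith
  have hne : (1 + 2*t) ≠ 0 := ne_of_gt h0
  have hd : (0:ℝ) < (2*A - 1)^2 + 4*C^2 := by positivity
  field_simp at hcirc
  have key2 : 256*(1+2*t)^3 * ((1+2*t)*A^2 - (3+4*t)/2*A + (1+t)/2 + (1+2*t)*C^2) = 0 := by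
    linear_combination (16*(1+2*t)^2) * hcirc
  rw [div_eq_iff (ne_of_gt hd)]
  have hscale : (256*(1+2*t)^3 : ℝ) ≠ 0 := by positivity
  apply mul_left_cancel₀ hscale
  linear_combination (-2) * key2
end

section
/- Fix t̃ ∈ ℝ with t̃ > −1/2, and let p = (1+t̃)/(1+2t̃), r = (p − 1/2)/2, c = (1/2 + p)/2. Parametrize the upper half-circle by γ(θ) = (c + r·cos θ, r·sin θ) for θ ∈ (0, π). Then as θ → π, γ(θ) → (1/2, 0), and for every θ ∈ (0, π) the point (A, C) = γ(θ) has C > 0 and satisfies ((2A−1)(1−A) − 2C²)/((2A−1)² + 4C²) = t̃. -/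
/-- The explicit half-circle path of constant twist `t̃`: with `p = (1+t̃)/(1+2t̃)`,
`r = (p−1/2)/2`, `c = (1/2+p)/2` and `γ(θ) = (c + r·cos θ, r·sin θ)`, one has
`γ(θ) → (1/2, 0)` as `θ → π`, and for each `θ ∈ (0, π)` the point `γ(θ)` has
positive second coordinate and unreduced twist equal to `t̃`. -/
theorem stmt19 (t : ℝ) (ht : -1/2 < t) :
    let p : ℝ := (1 + t)/(1 + 2*t)
    let r : ℝ := (p - 1/2)/2
    let c : ℝ := (1/2 + p)/2
    let γ : ℝ → ℝ × ℝ := fun θ => (c + r * Real.cos θ, r * Real.sin θ)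
    Filter.Tendsto γ (nhdsWithin Real.pi (Set.Iio Real.pi))
      (nhds ((1:ℝ)/2, (0:ℝ))) ∧
    ∀ θ ∈ Set.Ioo 0 Real.pi, 0 < (γ θ).2 ∧
      ((2*(γ θ).1 - 1)*(1 - (γ θ).1) - 2*((γ θ).2)^2) /
        ((2*(γ θ).1 - 1)^2 + 4*((γ θ).2)^2) = t := by
  intro p r c γ
  have h12 : (0:ℝ) < 1 + 2*t := by linarith
  have hne : (1 + 2*t) ≠ 0 := ne_of_gt h12
  have hr : r = 1/(4*(1+2*t)) := by
    show ((1 + t)/(1 + 2*t) - 1/2)/2 = _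
    rw [div_sub' hne]
    field_simp
    ring
  have hrpos : 0 < r := by rw [hr]; positivity
  constructor
  · have hc : Continuous γ := by
      apply Continuous.prodMk
      · exact continuous_const.add (continuous_const.mul Real.continuous_cos)
      · exact continuous_const.mul Real.continuous_sin
    have h2 : Filter.Tendsto γ (nhdsWithin Real.pi (Set.Iio Real.pi))
        (nhds (γ Real.pi)) :=
      (hc.tendsto Real.pi).mono_left nhdsWithin_le_nhds
    have hval : γ Real.pi = ((1:ℝ)/2, (0:ℝ)) := by
      have hcr : c - r = 1/2 := by
        show (1/2 + p)/2 - (p - 1/2)/2 = 1/2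
        ring
      simp only [γ, Real.cos_pi, Real.sin_pi, mul_zero, mul_neg_one]
      rw [Prod.ext_iff]
      constructor
      · simp; linarith
      · rfl
    rwa [hval] at h2
  · intro θ hθ
    obtain ⟨hθ0, hθπ⟩ := hθ
    have hs : 0 < Real.sin θ := Real.sin_pos_of_pos_of_lt_pi hθ0 hθπ
    have hss := Real.sin_sq_add_cos_sq θ
    have hcθ : -1 < Real.cos θ := by nlinarith [Real.neg_one_le_cos θ]
    refine ⟨mul_pos hrpos hs, ?_⟩
    have hA : (γ θ).1 = c + r * Real.cos θ := rfl
    have hC : (γ θ).2 = r * Real.sin θ := rfl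
    rw [hA, hC]
    have hc2 : c = 1/2 + r := by
      show (1/2 + p)/2 = 1/2 + (p - 1/2)/2
      ring
    have hden : (2*(c + r * Real.cos θ) - 1)^2 + 4*(r * Real.sin θ)^2
        = 8*r^2*(1 + Real.cos θ) := by
      rw [hc2]
      linear_combination (4*r^2) * hss
    have hdpos : 0 < 8*r^2*(1 + Real.cos θ) := by
      have h8 : 0 < 8*r^2 := by positivity
      have : 0 < 1 + Real.cos θ := by linarith
      exact mul_pos h8 this
    rw [hden, div_eq_iff (ne_of_gt hdpos)]
    have h1 : 1/2 - 2*r = 4*r*t := by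
      rw [hr]; field_simp; ring
    rw [hc2]
    linear_combination (2*r*(1 + Real.cos θ)) * h1 - (2*r^2) * hss
end
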